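/- Let D be a division algebra finite-dimensional over its center F with n = √(dim_F D), and let K be a subfield of D containing F. Then dim_F K ≤ n, with equality if and only if K is a maximal subfield of D. -/

import Mathlib

set_option maxHeartbeats 1000000

open scoped TensorProduct

section


open Finset in
private lemma lemA {F : Type*} [Field F] {D : Type*} [DivisionRing D] [Algebra F D]
    (hcentral : Set.center D = Set.range (algebraMap F D))
    {ι : Type*} [DecidableEq ι] (l : ι → D) :
    ∀ (s : Finset ι) (d : ι → D),
      (∀ c : ι → F, ∑ i ∈ s, c i • l i = 0 → ∀ i ∈ s, c i = 0) →
      (∀ x : D, ∑ i ∈ s, d i * x * l i = 0) → ∀ i ∈ s, d i = 0 := by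
  intro s
  induction s using Finset.strongInduction with
  | _ s ih =>
    intro d hl h
    by_contra hcon
    push_neg at hcon
    obtain ⟨i₀, hi₀, hd₀⟩ := hcon
    set e : ι → D := fun i => (d i₀)⁻¹ * d i with he_def
    have he0 : e i₀ = 1 := inv_mul_cancel₀ hd₀
    have he : ∀ x : D, ∑ i ∈ s, e i * x * l i = 0 := by
      intro x
      have := congrArg (fun t => (d i₀)⁻¹ * t) (h x)
      simpa [Finset.mul_sum, mul_assoc, he_def] using this
    -- every e i (i ∈ s) commutes with every c : D
    have hcomm : ∀ i ∈ s, ∀ c : D, e i * c = c * e i := by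
      intro i hi c
      have h2 : ∀ x : D, ∑ j ∈ s.erase i₀, (e j * c - c * e j) * x * l j = 0 := by
        intro x
        have hA := he (c * x)
        have hB := congrArg (fun t => c * t) (he x)
        simp only [Finset.mul_sum] at hB
        have key : ∑ j ∈ s, (e j * c - c * e j) * x * l j = 0 := by
          have : ∑ j ∈ s, (e j * c - c * e j) * x * l j
              = ∑ j ∈ s, (e j * (c * x) * l j - c * (e j * x * l j)) := by
            refine Finset.sum_congr rfl fun j _ => ?_
            noncomm_ring
          rw [this, Finset.sum_sub_distrib, hA, hB]
          simp
        have hzero : (e i₀ * c - c * e i₀) * x * l i₀ = 0 := by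
          rw [he0]; simp
        rwa [← Finset.add_sum_erase _ _ hi₀, hzero, zero_add] at key
      have hl' : ∀ c' : ι → F, ∑ j ∈ s.erase i₀, c' j • l j = 0 → ∀ j ∈ s.erase i₀, c' j = 0 := by
        intro c' hc'
        have : ∑ j ∈ s, (Function.update c' i₀ 0) j • l j = 0 := by
          rw [← Finset.add_sum_erase _ _ hi₀]
          rw [Function.update_self]
          rw [Finset.sum_congr rfl fun j hj =>
            by rw [Function.update_of_ne (Finset.ne_of_mem_erase hj)]]
          simpa using hc'
        intro j hj
        have := hl _ this j (Finset.mem_of_mem_erase hj)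
        rwa [Function.update_of_ne (Finset.ne_of_mem_erase hj)] at this
      have hz := ih (s.erase i₀) (Finset.erase_ssubset hi₀) _ hl' h2
      rcases eq_or_ne i i₀ with rfl | hne
      · rw [he0]; simp
      · have := hz i (Finset.mem_erase.mpr ⟨hne, hi⟩)
        linear_combination (norm := noncomm_ring) this
    -- hence e i is central
    have hcen : ∀ i ∈ s, ∃ f : F, e i = algebraMap F D f := by
      intro i hi
      have : e i ∈ Set.center D := by
        rw [Semigroup.mem_center_iff]
        intro c; exact (hcomm i hi c).symm
      rw [hcentral] at this
      obtain ⟨f, hf⟩ := this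
      exact ⟨f, hf.symm⟩
    classical
    choose! f hf using hcen
    have hsum : ∑ i ∈ s, f i • l i = 0 := by
      have h1 := he 1
      calc ∑ i ∈ s, f i • l i = ∑ i ∈ s, e i * 1 * l i :=
            Finset.sum_congr rfl fun i hi => by rw [mul_one, hf i hi, Algebra.smul_def]
        _ = 0 := h1
    have : f i₀ = 0 := hl f hsum i₀ hi₀
    have h1 : (1 : D) = 0 := by
      rw [← he0, hf i₀ hi₀, this, map_zero]
    exact one_ne_zero h1


section
variable {F : Type*} [Field F] {D : Type*} [DivisionRing D] [Algebra F D]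
variable [FiniteDimensional F D]

private lemma mul_shuffle {D : Type*} [Ring D] {A k u v : D} (h : A * k = k * A) :
    A * (k * u) * v = k * (A * u * v) := by
  rw [← mul_assoc, h]; noncomm_ring

variable [FiniteDimensional F D]

private lemma part1 (hcentral : Set.center D = Set.range (algebraMap F D))
    (n : ℕ) (hn : Module.finrank F D = n ^ 2)
    (K : Subalgebra F D) (hK : ∀ x ∈ K, ∀ y ∈ K, x * y = y * x) :
    Module.finrank F K ≤ n := by
  classical
  have hn0 : 0 < n := by
    rcases Nat.eq_zero_or_pos n with rfl | h
    · have := Module.finrank_pos (R := F) (M := D)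
      rw [hn] at this; simp at this
    · exact h
  set Kf : Subfield D :=
    { K.toSubring with
      inv_mem' := fun {x} hx => IsIntegral.inv_mem (IsIntegral.of_finite F x) hx } with hKfdef
  have hmem : ∀ x : D, x ∈ Kf ↔ x ∈ K := fun x => Iff.rfl
  letI : Algebra F ↥Kf :=
    RingHom.toAlgebra' ((algebraMap F D).codRestrict Kf.toSubring
        (fun f => K.algebraMap_mem f))
      (fun c x => Subtype.ext (Algebra.commutes c (x : D)))
  have hsmulL : ∀ (f : F) (x : ↥Kf), ((f • x : ↥Kf) : D) = f • (x : D) :=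
    fun f x => (Algebra.smul_def f (x : D)).symm
  have hsmulKfD : ∀ (l : ↥Kf) (x : D), l • x = (l : D) * x := fun _ _ => rfl
  haveI : IsScalarTower F ↥Kf D := ⟨fun f l x => by
    show ((f • l : ↥Kf) : D) * x = f • ((l : D) * x)
    rw [hsmulL, Algebra.smul_def, Algebra.smul_def, mul_assoc]⟩
  let eK : ↥K ≃ₗ[F] ↥Kf :=
    { toFun := fun x => ⟨x.1, x.2⟩
      map_add' := fun x y => rfl
      map_smul' := fun f x => Subtype.ext
        (show f • (x : D) = algebraMap F D f * (x : D) from Algebra.smul_def f (x : D))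
      invFun := fun x => ⟨x.1, x.2⟩
      left_inv := fun x => rfl
      right_inv := fun x => rfl }
  haveI : FiniteDimensional F ↥Kf := Module.Finite.equiv eK
  have hrkK : Module.finrank F ↥K = Module.finrank F ↥Kf := eK.finrank_eq
  haveI : FiniteDimensional ↥Kf D := FiniteDimensional.right F ↥Kf D
  set m := Module.finrank F ↥Kf with hmdef
  set q := Module.finrank ↥Kf D with hqdef
  have htower : m * q = n ^ 2 := by
    rw [hmdef, hqdef, Module.finrank_mul_finrank F ↥Kf D, hn]
  let e : Module.Basis (Fin q) ↥Kf D := Module.finBasis ↥Kf D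
  let c : Module.Basis (Fin m) F ↥Kf := Module.finBasis F ↥Kf
  let b : Module.Basis (Fin (n ^ 2)) F D := (Module.finBasis F D).reindex (finCongr hn)
  have hbInd : ∀ cf : Fin (n ^ 2) → F, ∑ i, cf i • b i = 0 → ∀ i, cf i = 0 :=
    Fintype.linearIndependent_iff.mp b.linearIndependent
  let Ψ : Fin m × Fin (n ^ 2) → (Fin q → D) := fun p t => (c p.1 : D) * e t * b p.2
  have hΨ : LinearIndependent F Ψ := by
    rw [Fintype.linearIndependent_iff]
    intro g hg
    set G : Fin (n ^ 2) → D := fun i => ∑ j, g (j, i) • ((c j : ↥Kf) : D) with hGdef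
    have hGK : ∀ i, G i ∈ K := by
      intro i
      exact Subalgebra.sum_mem K fun j _ => Subalgebra.smul_mem K ((c j).2) _
    have hGbasis : ∀ t, ∑ i, G i * e t * b i = 0 := by
      intro t
      have h1 := congrFun hg t
      simp only [Finset.sum_apply, Pi.smul_apply, Pi.zero_apply, Ψ] at h1
      calc ∑ i, G i * e t * b i
          = ∑ i, ∑ j, g (j, i) • ((c j : D) * e t * b i) := by
            refine Finset.sum_congr rfl fun i _ => ?_
            rw [hGdef]
            simp only [Finset.sum_mul, smul_mul_assoc]
        _ = ∑ p : Fin m × Fin (n ^ 2), g p • ((c p.1 : D) * e t * b p.2) := by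
            rw [Fintype.sum_prod_type]
            rw [Finset.sum_comm]
        _ = 0 := h1
    have hGall : ∀ x : D, ∑ i, G i * x * b i = 0 := by
      intro x
      calc ∑ i, G i * x * b i
          = ∑ i, ∑ t, ((e.repr x t : D) * (G i * e t * b i)) := by
            refine Finset.sum_congr rfl fun i _ => ?_
            conv_lhs => rw [← Module.Basis.sum_repr e x]
            rw [Finset.mul_sum, Finset.sum_mul]
            refine Finset.sum_congr rfl fun t _ => ?_
            rw [hsmulKfD]
            exact mul_shuffle (hK _ (hGK i) _ ((e.repr x t).2))
        _ = ∑ t, (e.repr x t : D) * (∑ i, G i * e t * b i) := by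
            rw [Finset.sum_comm]
            exact Finset.sum_congr rfl fun t _ => (Finset.mul_sum _ _ _).symm
        _ = 0 := by
            refine Finset.sum_eq_zero fun t _ => ?_
            rw [hGbasis t, mul_zero]
    have hG0 : ∀ i, G i = 0 := by
      have := lemA hcentral (fun i : Fin (n ^ 2) => b i) Finset.univ G
        (fun cf h i _ => hbInd cf (by simpa using h) i)
        (fun x => by simpa using hGall x)
      exact fun i => this i (Finset.mem_univ i)
    rintro ⟨j, i⟩
    have hsum : ∑ j', g (j', i) • c j' = (0 : ↥Kf) := by
      apply Subtype.val_injective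
      push_cast
      rw [Finset.sum_congr rfl fun j' _ => hsmulL (g (j', i)) (c j')]
      simpa using hG0 i
    exact Fintype.linearIndependent_iff.mp c.linearIndependent _ hsum j
  have hcard := hΨ.fintype_card_le_finrank
  have hrkV : Module.finrank F (Fin q → D) = q * n ^ 2 := by
    simp [Module.finrank_pi_fintype, hn]
  rw [hrkV, Fintype.card_prod, Fintype.card_fin, Fintype.card_fin] at hcard
  have hmle : m ≤ q := by
    have h2 : 0 < n ^ 2 := by positivity
    exact Nat.le_of_mul_le_mul_right (by linarith [hcard]) h2
  have hsq : m ^ 2 ≤ n ^ 2 := by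
    calc m ^ 2 = m * m := sq m
      _ ≤ m * q := Nat.mul_le_mul_left m hmle
      _ = n ^ 2 := htower
  rw [hrkK]
  exact (Nat.pow_le_pow_iff_left (two_ne_zero)).mp hsq


private lemma part2 (hcentral : Set.center D = Set.range (algebraMap F D))
    (n : ℕ) (hn : Module.finrank F D = n ^ 2)
    (K : Subalgebra F D) (hK : ∀ x ∈ K, ∀ y ∈ K, x * y = y * x)
    (hC : ∀ y : D, (∀ k ∈ K, y * k = k * y) → y ∈ K) :
    n ≤ Module.finrank F K := by
  classical
  set Kf : Subfield D :=
    { K.toSubring with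
      inv_mem' := fun {x} hx => IsIntegral.inv_mem (IsIntegral.of_finite F x) hx } with hKfdef
  letI : Algebra F ↥Kf :=
    RingHom.toAlgebra' ((algebraMap F D).codRestrict Kf.toSubring
        (fun f => K.algebraMap_mem f))
      (fun c x => Subtype.ext (Algebra.commutes c (x : D)))
  have hsmulL : ∀ (f : F) (x : ↥Kf), ((f • x : ↥Kf) : D) = f • (x : D) :=
    fun f x => (Algebra.smul_def f (x : D)).symm
  have hsmulKfD : ∀ (l : ↥Kf) (x : D), l • x = (l : D) * x := fun _ _ => rfl
  haveI : IsScalarTower F ↥Kf D := ⟨fun f l x => by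
    show ((f • l : ↥Kf) : D) * x = f • ((l : D) * x)
    rw [hsmulL, Algebra.smul_def, Algebra.smul_def, mul_assoc]⟩
  let eK : ↥K ≃ₗ[F] ↥Kf :=
    { toFun := fun x => ⟨x.1, x.2⟩
      map_add' := fun x y => rfl
      map_smul' := fun f x => Subtype.ext
        (show f • (x : D) = algebraMap F D f * (x : D) from Algebra.smul_def f (x : D))
      invFun := fun x => ⟨x.1, x.2⟩
      left_inv := fun x => rfl
      right_inv := fun x => rfl }
  haveI : FiniteDimensional F ↥Kf := Module.Finite.equiv eK
  have hrkK : Module.finrank F ↥K = Module.finrank F ↥Kf := eK.finrank_eq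
  haveI : FiniteDimensional ↥Kf D := FiniteDimensional.right F ↥Kf D
  set m := Module.finrank F ↥Kf with hmdef
  set q := Module.finrank ↥Kf D with hqdef
  have htower : m * q = n ^ 2 := by
    rw [hmdef, hqdef, Module.finrank_mul_finrank F ↥Kf D, hn]
  let e : Module.Basis (Fin q) ↥Kf D := Module.finBasis ↥Kf D
  -- the bimodule structure
  haveI : SMulCommClass ↥Kf Dᵐᵒᵖ D :=
    ⟨fun l b x => by
      show (l : D) * (x * b.unop) = ((l : D) * x) * b.unop
      rw [mul_assoc]⟩
  letI : Module (↥Kf ⊗[F] Dᵐᵒᵖ) D := TensorProduct.Algebra.module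
  haveI hsimple : IsSimpleModule (↥Kf ⊗[F] Dᵐᵒᵖ) D := by
    haveI : Nontrivial (Submodule (↥Kf ⊗[F] Dᵐᵒᵖ) D) :=
      ⟨⊥, ⊤, fun h => one_ne_zero ((Submodule.mem_bot (↥Kf ⊗[F] Dᵐᵒᵖ)).mp
        (h ▸ Submodule.mem_top (x := (1 : D))))⟩
    refine { eq_bot_or_eq_top := fun N => ?_ }
    rcases eq_or_ne N ⊥ with h | h
    · exact Or.inl h
    · right
      obtain ⟨x, hxN, hx0⟩ := Submodule.ne_bot_iff N |>.mp h
      rw [eq_top_iff]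
      intro y _
      have hy : (((1 : ↥Kf) ⊗ₜ[F] MulOpposite.op (x⁻¹ * y)) • x : D) = y := by
        rw [TensorProduct.Algebra.smul_def]
        show (1 : ↥Kf) • (x * (x⁻¹ * y)) = y
        rw [hsmulKfD, OneMemClass.coe_one, one_mul, ← mul_assoc, mul_inv_cancel₀ hx0, one_mul]
      rw [← hy]
      exact N.smul_mem _ hxN
  have hn0 : 0 < n := by
    rcases Nat.eq_zero_or_pos n with rfl | h
    · have := Module.finrank_pos (R := F) (M := D)
      rw [hn] at this; simp at this
    · exact h
  -- coordinatewise smul formula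
  have hcoord : ∀ (l : ↥Kf) (d : D) (w : Fin q → D) (i : Fin q),
      ((l ⊗ₜ[F] MulOpposite.op d) • w) i = (l : D) * (w i * d) := by
    intro l d w i
    have h1 : ((l ⊗ₜ[F] MulOpposite.op d) • w) i = (l ⊗ₜ[F] MulOpposite.op d) • (w i) := rfl
    rw [h1, TensorProduct.Algebra.smul_def]
    rw [show (MulOpposite.op d • w i) = w i * d from rfl, hsmulKfD]
  -- semisimplicity of the q-fold product
  haveI hss : IsSemisimpleModule (↥Kf ⊗[F] Dᵐᵒᵖ) (Fin q → D) := by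
    have hsingleinj : ∀ t : Fin q,
        Function.Injective (LinearMap.single (↥Kf ⊗[F] Dᵐᵒᵖ) (fun _ : Fin q => D) t) := by
      intro t a b hab
      have := congrFun hab t
      simpa using this
    refine isSemisimpleModule_of_isSemisimpleModule_submodule'
      (p := fun t : Fin q =>
        LinearMap.range (LinearMap.single (↥Kf ⊗[F] Dᵐᵒᵖ) (fun _ : Fin q => D) t))
      (fun t => ?_) ?_
    · exact IsSemisimpleModule.congr
        (LinearEquiv.ofInjective _ (hsingleinj t)).symm
    · rw [eq_top_iff]
      intro z _
      have hz : z = ∑ t, Pi.single t (z t) := (Finset.univ_sum_single z).symm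
      rw [hz]
      exact Submodule.sum_mem _ fun t _ =>
        Submodule.mem_iSup_of_mem t ⟨z t, rfl⟩
  set v : Fin q → D := fun t => e t with hvdef
  set N := Submodule.span (↥Kf ⊗[F] Dᵐᵒᵖ) {v} with hNdef
  obtain ⟨N', hN'⟩ := exists_isCompl N
  set g : (Fin q → D) →ₗ[↥Kf ⊗[F] Dᵐᵒᵖ] (Fin q → D) :=
    N.subtype ∘ₗ N.linearProjOfIsCompl N' hN' with hgdef
  have hgmem : ∀ z, g z ∈ N := fun z => (N.linearProjOfIsCompl N' hN' z).2
  have hgN : ∀ z, ∀ hz : z ∈ N, g z = z := fun z hz =>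
    congrArg Subtype.val (Submodule.linearProjOfIsCompl_apply_left hN' ⟨z, hz⟩)
  set δ : Fin q → (Fin q → D) := fun j => Pi.single j (1 : D) with hδdef
  have hδdecomp : ∀ z : Fin q → D,
      z = ∑ j, ((1 : ↥Kf) ⊗ₜ[F] MulOpposite.op (z j)) • δ j := by
    intro z
    funext i
    rw [Finset.sum_apply]
    rw [Finset.sum_congr rfl fun j _ => hcoord 1 (z j) (δ j) i]
    rw [Finset.sum_congr rfl fun j _ => by
      rw [OneMemClass.coe_one, one_mul]]
    rw [Finset.sum_eq_single i (fun j _ hji => by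
        rw [hδdef]
        simp [Pi.single_eq_of_ne (Ne.symm hji)]) (fun h => absurd (Finset.mem_univ i) h)]
    rw [hδdef]
    simp
  have hlin : ∀ (φ : (Fin q → D) →ₗ[↥Kf ⊗[F] Dᵐᵒᵖ] (Fin q → D)) (z : Fin q → D),
      φ z = ∑ j, ((1 : ↥Kf) ⊗ₜ[F] MulOpposite.op (z j)) • φ (δ j) := by
    intro φ z
    conv_lhs => rw [hδdecomp z]
    rw [map_sum]
    exact Finset.sum_congr rfl fun j _ => φ.map_smul _ _
  set hmap : (Fin q → D) →ₗ[↥Kf ⊗[F] Dᵐᵒᵖ] (Fin q → D) := LinearMap.id - g with hhdef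
  have hδK : ∀ i j : Fin q, hmap (δ j) i ∈ K := by
    intro i j
    refine hC _ ?_
    intro k hk
    have h1 : ((⟨k, hk⟩ : ↥Kf) ⊗ₜ[F] MulOpposite.op (1 : D)) • δ j
        = ((1 : ↥Kf) ⊗ₜ[F] MulOpposite.op k) • δ j := by
      funext i'
      rw [hcoord, hcoord, OneMemClass.coe_one, one_mul, mul_one]
      show k * δ j i' = δ j i' * k
      rcases eq_or_ne i' j with rfl | hne
      · rw [hδdef]; simp
      · rw [hδdef]; simp [Pi.single_eq_of_ne hne]
    have h2 := congrFun ((hmap.map_smul ((⟨k, hk⟩ : ↥Kf) ⊗ₜ[F] MulOpposite.op (1 : D))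
      (δ j)).symm.trans ((congrArg hmap h1).trans
        (hmap.map_smul ((1 : ↥Kf) ⊗ₜ[F] MulOpposite.op k) (δ j)))) i
    rw [hcoord, hcoord, OneMemClass.coe_one, one_mul, mul_one] at h2
    exact h2.symm
  have hvN : v ∈ N := Submodule.mem_span_singleton_self v
  have hv0 : hmap v = 0 := by
    rw [hhdef]
    simp only [LinearMap.sub_apply, LinearMap.id_apply]
    rw [hgN v hvN, sub_self]
  have hrow : ∀ i, ∑ j, hmap (δ j) i * e j = 0 := by
    intro i
    have h3 := congrFun (hlin hmap v) i
    rw [hv0] at h3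
    rw [Finset.sum_apply] at h3
    rw [Finset.sum_congr rfl fun j _ => hcoord 1 (v j) (hmap (δ j)) i] at h3
    rw [Finset.sum_congr rfl fun j _ => by rw [OneMemClass.coe_one, one_mul]] at h3
    exact h3.symm
  have hzeroa : ∀ i j, hmap (δ j) i = 0 := by
    intro i j
    have hind := Fintype.linearIndependent_iff.mp e.linearIndependent
      (fun j' => (⟨hmap (δ j') i, hδK i j'⟩ : ↥Kf)) ?_ j
    · exact congrArg Subtype.val hind
    · calc ∑ j', (⟨hmap (δ j') i, hδK i j'⟩ : ↥Kf) • e j'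
          = ∑ j', hmap (δ j') i * e j' := Finset.sum_congr rfl fun j' _ => hsmulKfD _ _
        _ = 0 := hrow i
  have hmap0 : ∀ z, hmap z = 0 := by
    intro z
    rw [hlin hmap z]
    refine Finset.sum_eq_zero fun j _ => ?_
    have hδ0 : hmap (δ j) = 0 := funext fun i => hzeroa i j
    rw [hδ0, smul_zero]
  have hNtop : N = ⊤ := by
    rw [eq_top_iff]
    intro z _
    have hzg : z = g z := by
      have h4 := hmap0 z
      rw [hhdef] at h4
      simp only [LinearMap.sub_apply, LinearMap.id_apply] at h4
      rw [sub_eq_zero] at h4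
      exact h4
    rw [hzg]
    exact hgmem z
  -- the surjection and dimension count
  let θ : (↥Kf ⊗[F] Dᵐᵒᵖ) →ₗ[F] (Fin q → D) :=
    { toFun := fun b => b • v
      map_add' := fun b b' => add_smul b b' v
      map_smul' := fun f b => by
        show (f • b) • v = f • (b • v)
        rw [Algebra.smul_def f b, show ((algebraMap F (↥Kf ⊗[F] Dᵐᵒᵖ) f * b) • v) = (algebraMap F (↥Kf ⊗[F] Dᵐᵒᵖ) f) • (b • v) from funext fun i => mul_smul (algebraMap F (↥Kf ⊗[F] Dᵐᵒᵖ) f) b (v i), Algebra.TensorProduct.algebraMap_apply]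
        funext i
        rw [show ((1 : Dᵐᵒᵖ) : Dᵐᵒᵖ) = MulOpposite.op (1 : D) from rfl]
        rw [hcoord, mul_one]
        show (algebraMap F D f) * (b • v) i = (f • (b • v)) i
        simp [Pi.smul_apply, Algebra.smul_def, Pi.algebraMap_apply] }
  have hθsurj : Function.Surjective θ := by
    intro z
    have hz : z ∈ N := hNtop ▸ Submodule.mem_top
    rw [hNdef] at hz
    obtain ⟨b, hb⟩ := Submodule.mem_span_singleton.mp hz
    exact ⟨b, hb⟩
  have hr1 : Module.finrank F (↥Kf ⊗[F] Dᵐᵒᵖ) = m * n ^ 2 := by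
    rw [Module.finrank_tensorProduct, ← (MulOpposite.opLinearEquiv F (M := D)).finrank_eq, hn]
  have hr2 : Module.finrank F (Fin q → D) = q * n ^ 2 := by
    simp [Module.finrank_pi_fintype, hn]
  have hle2 : q * n ^ 2 ≤ m * n ^ 2 := by
    have h5 := θ.finrank_range_le
    rw [LinearMap.range_eq_top.mpr hθsurj, finrank_top, hr1, hr2] at h5
    exact h5
  have hn2 : 0 < n ^ 2 := by positivity
  have hqm : q ≤ m := Nat.le_of_mul_le_mul_right hle2 hn2
  have hsq : n ^ 2 ≤ m ^ 2 := by
    calc n ^ 2 = m * q := htower.symm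
      _ ≤ m * m := Nat.mul_le_mul_left m hqm
      _ = m ^ 2 := (sq m).symm
  rw [hrkK]
  exact (Nat.pow_le_pow_iff_left two_ne_zero).mp hsq


end

theorem stmt_12 (F : Type*) [Field F] (D : Type*) [DivisionRing D] [Algebra F D]
    [FiniteDimensional F D]
    (hcentral : Set.center D = Set.range (algebraMap F D))
    (n : ℕ) (hn : Module.finrank F D = n ^ 2)
    (K : Subalgebra F D) (hK : ∀ x ∈ K, ∀ y ∈ K, x * y = y * x) :
    Module.finrank F K ≤ n ∧
      (Module.finrank F K = n ↔
        ∀ K' : Subalgebra F D, (∀ x ∈ K', ∀ y ∈ K', x * y = y * x) → K ≤ K' → K' = K) := by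
  refine ⟨part1 hcentral n hn K hK, ?_, ?_⟩
  · intro heq K' hK' hle
    have h1 : Module.finrank F K' ≤ n := part1 hcentral n hn K' hK'
    have h2 : Subalgebra.toSubmodule K ≤ Subalgebra.toSubmodule K' := hle
    have h3 : Module.finrank F (Subalgebra.toSubmodule K')
        ≤ Module.finrank F (Subalgebra.toSubmodule K) := by
      show Module.finrank F K' ≤ Module.finrank F K
      rw [heq]; exact h1
    have h4 := Submodule.eq_of_le_of_finrank_le h2 h3
    exact Subalgebra.toSubmodule.injective h4.symm
  · intro hmax
    have hC : ∀ y : D, (∀ k ∈ K, y * k = k * y) → y ∈ K := by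
      intro y hy
      have hgen : ∀ a ∈ insert y (K : Set D), ∀ b ∈ insert y (K : Set D), a * b = b * a := by
        intro a ha b hb
        rcases Set.mem_insert_iff.mp ha with rfl | ha'
        · rcases Set.mem_insert_iff.mp hb with rfl | hb'
          · rfl
          · exact (hy b hb')
        · rcases Set.mem_insert_iff.mp hb with rfl | hb'
          · exact (hy a ha').symm
          · exact hK a ha' b hb'
      letI := Algebra.adjoinCommRingOfComm F hgen
      have hcomm' : ∀ x ∈ Algebra.adjoin F (insert y (K : Set D)),
          ∀ z ∈ Algebra.adjoin F (insert y (K : Set D)), x * z = z * x := by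
        intro x hx z hz
        exact congrArg Subtype.val
          (mul_comm (⟨x, hx⟩ : Algebra.adjoin F (insert y (K : Set D))) ⟨z, hz⟩)
      have hKle : K ≤ Algebra.adjoin F (insert y (K : Set D)) := fun x hx =>
        Algebra.subset_adjoin (Set.mem_insert_of_mem _ hx)
      have heq' := hmax _ hcomm' hKle
      have hy' : y ∈ Algebra.adjoin F (insert y (K : Set D)) :=
        Algebra.subset_adjoin (Set.mem_insert _ _)
      rwa [heq'] at hy'
    exact le_antisymm (part1 hcentral n hn K hK) (part2 hcentral n hn K hK hC)

end
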